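/- For all natural numbers n and k with 1 ≤ k ≤ n−1, the Fibonomial coefficients satisfy the recurrence binom(n,k)_F = fib(k+1)·binom(n−1,k)_F + fib(n−k−1)·binom(n−1,k−1)_F, where binom(n,k)_F = (∏_{i=1}^{n} fib(i)) / ((∏_{i=1}^{k} fib(i))·(∏_{i=1}^{n-k} fib(i))) regarded as a rational number. -/

import Mathlib

/-- The Fibonacci `F`-factorial, as a rational number. -/
noncomputable def fibFact (n : ℕ) : ℚ := ∏ i ∈ Finset.Icc 1 n, (Nat.fib i : ℚ)

lemma fibFact_succ (n : ℕ) : fibFact (n + 1) = fibFact n * (Nat.fib (n + 1) : ℚ) := by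
  unfold fibFact
  rw [Finset.prod_Icc_succ_top (Nat.le_add_left 1 n)]

lemma fibFact_ne_zero (n : ℕ) : fibFact n ≠ 0 := by
  induction n with
  | zero => simp [fibFact]
  | succ m ih =>
    rw [fibFact_succ]
    refine mul_ne_zero ih ?_
    have := Nat.fib_pos.mpr (Nat.succ_pos m); positivity

/-- The Fibonomial coefficient `binom(n,k)_F = F_n!/(F_k!·F_{n-k}!)` as a rational number. -/
noncomputable def fibBinom (n k : ℕ) : ℚ := fibFact n / (fibFact k * fibFact (n - k))

/-- For `1 ≤ k ≤ n - 1`, the Fibonomial coefficients satisfy the recurrence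
`binom(n,k)_F = fib(k+1)·binom(n−1,k)_F + fib(n−k−1)·binom(n−1,k−1)_F`. -/
theorem fibBinom_recurrence (n k : ℕ) (hk : 1 ≤ k) (hkn : k ≤ n - 1) :
    fibBinom n k
      = (Nat.fib (k + 1) : ℚ) * fibBinom (n - 1) k
        + (Nat.fib (n - k - 1) : ℚ) * fibBinom (n - 1) (k - 1) := by
  obtain ⟨j, rfl⟩ : ∃ j, k = j + 1 := ⟨k - 1, (Nat.succ_pred_eq_of_pos hk).symm⟩
  obtain ⟨e, rfl⟩ : ∃ e, n = j + e + 2 := by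
    refine ⟨n - j - 2, ?_⟩
    omega
  have h1 : j + e + 2 - 1 = j + e + 1 := by omega
  have h2 : j + e + 2 - (j + 1) = e + 1 := by omega
  have h4 : j + e + 1 - (j + 1) = e := by omega
  have h5 : j + 1 - 1 = j := by omega
  have h6 : j + e + 1 - j = e + 1 := by omega
  rw [h1, h2, Nat.add_sub_cancel, h5]
  unfold fibBinom
  rw [h2, h4, h6]
  have hn : j + e + 2 = (j + e + 1) + 1 := by ring
  rw [hn, fibFact_succ, fibFact_succ (j), fibFact_succ e]
  have hfib : (Nat.fib (j + e + 1 + 1) : ℚ)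
      = (Nat.fib (j + 1) : ℚ) * Nat.fib e + (Nat.fib (j + 2) : ℚ) * Nat.fib (e + 1) := by
    have := Nat.fib_add (j + 1) e
    have h7 : j + 1 + e + 1 = j + e + 1 + 1 := by ring
    rw [h7] at this
    exact_mod_cast this
  rw [hfib]
  have A := fibFact_ne_zero (j + e + 1)
  have B := fibFact_ne_zero j
  have C := fibFact_ne_zero e
  have D : (Nat.fib (j + 1) : ℚ) ≠ 0 := by
    have := Nat.fib_pos.mpr (Nat.succ_pos j); positivity
  have E : (Nat.fib (e + 1) : ℚ) ≠ 0 := by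
    have := Nat.fib_pos.mpr (Nat.succ_pos e); positivity
  field_simp
  ring
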